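/- For every n ≥ 2 and m ≥ 2, let k = ⌊min{m/2, log₂ n}⌋. On the n-point uniform metric space there exists a pool R of 2k ≤ m nonempty subsets such that no randomized online algorithm for the metrical service system is c-competitive on R for any c < k/2; i.e., for every probability distribution over deterministic online algorithms and every additive constant a, there is a request sequence ρ over R whose expected online cost exceeds c·z*(ρ) + a. In particular, the randomized competitive ratio for chasing sets from a pool of m subsets of an n-point uniform space is Ω(min{m, log n}). -/
import Mathlib


/-- Movement cost of the state sequence `ss` starting from `s₀`: `Σ_t d(s_{t-1}, s_t)`. -/
def mssPathCost {n : ℕ} (d : Fin n → Fin n → ℝ) : Fin n → List (Fin n) → ℝ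
  | _, [] => 0
  | s₀, s :: ss => d s₀ s + mssPathCost d s ss

/-- `z*(ρ)`: the optimal (offline) cost of serving the request sequence `ρ` (a sequence of
subsets of the point set) from `s₀`; a feasible solution must satisfy `s_t ∈ ρ_t` for all `t`. -/
noncomputable def mssOpt {n : ℕ} (d : Fin n → Fin n → ℝ) (s₀ : Fin n)
    (ρ : List (Finset (Fin n))) : ℝ :=
  sInf {x : ℝ | ∃ ss : List (Fin n),
    List.Forall₂ (fun (s : Fin n) (S : Finset (Fin n)) => s ∈ S) ss ρ ∧
    mssPathCost d s₀ ss = x}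

/-- The sequence of states produced by a deterministic online algorithm `A`
(which sees only the prefix `ρ₁,…,ρ_t` when choosing `s_t`) on the request sequence `ρ`. -/
def mssStates {n : ℕ} (A : List (Finset (Fin n)) → Fin n) (ρ : List (Finset (Fin n))) :
    List (Fin n) :=
  (List.range ρ.length).map fun t => A (ρ.take (t + 1))

/-- A deterministic online algorithm for a metrical service system is valid if it always
serves the last (nonempty) request from within that request. -/
def ValidAlg {n : ℕ} (A : List (Finset (Fin n)) → Fin n) : Prop :=
  ∀ (l : List (Finset (Fin n))) (S : Finset (Fin n)), S.Nonempty → A (l ++ [S]) ∈ S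

/-- The cost incurred by the deterministic online algorithm `A` on `ρ`, starting at `s₀`. -/
def mssAlgCost {n : ℕ} (d : Fin n → Fin n → ℝ) (s₀ : Fin n)
    (A : List (Finset (Fin n)) → Fin n) (ρ : List (Finset (Fin n))) : ℝ :=
  mssPathCost d s₀ (mssStates A ρ)

/-- `A` is `c`-competitive on the request pool `R`: there is an additive constant `a` such
that on every request sequence drawn from `R`, the cost of `A` is at most `c·z*(ρ) + a`. -/
def MssCompetitive {n : ℕ} (d : Fin n → Fin n → ℝ) (s₀ : Fin n) (R : Set (Finset (Fin n)))
    (c : ℝ) (A : List (Finset (Fin n)) → Fin n) : Prop :=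
  ∃ a : ℝ, ∀ ρ : List (Finset (Fin n)), (∀ S ∈ ρ, S ∈ R) →
    mssAlgCost d s₀ A ρ ≤ c * mssOpt d s₀ ρ + a

/-- A randomized online algorithm for a metrical service system: a finitely supported
probability distribution over (valid) deterministic online algorithms. -/
structure MssRandAlg (n : ℕ) where
  k : ℕ
  alg : Fin k → List (Finset (Fin n)) → Fin n
  valid : ∀ i, ValidAlg (alg i)
  p : Fin k → ℝ
  p_nonneg : ∀ i, 0 ≤ p i
  sum_p : ∑ i, p i = 1

/-- Expected cost of a randomized online algorithm on `ρ`, starting at `s₀`. -/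
def mssRandCost {n : ℕ} (d : Fin n → Fin n → ℝ) (s₀ : Fin n) (B : MssRandAlg n)
    (ρ : List (Finset (Fin n))) : ℝ :=
  ∑ i, B.p i * mssAlgCost d s₀ (B.alg i) ρ

/-- A randomized online algorithm `B` is `c`-competitive on the request pool `R`. -/
def MssRandCompetitive {n : ℕ} (d : Fin n → Fin n → ℝ) (s₀ : Fin n)
    (R : Set (Finset (Fin n))) (c : ℝ) (B : MssRandAlg n) : Prop :=
  ∃ a : ℝ, ∀ ρ : List (Finset (Fin n)), (∀ S ∈ ρ, S ∈ R) →
    mssRandCost d s₀ B ρ ≤ c * mssOpt d s₀ ρ + a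

/-- The uniform metric on `n` points: `d(x,y) = 1` for `x ≠ y`, `d(x,x) = 0`. -/
def unifR (n : ℕ) (x y : Fin n) : ℝ := if x = y then 0 else 1

/-- A two-level HST metric with aspect ratio `C > 1`, given by a map `π` assigning to each
point its cluster: `d(x,y) = 1` for distinct points in the same cluster, `d(x,y) = C` for
points in different clusters, and `d(x,x) = 0`. -/
def hst2 (n : ℕ) (π : Fin n → Fin n) (C : ℝ) (x y : Fin n) : ℝ :=
  if x = y then 0 else if π x = π y then 1 else C


/-! ### Auxiliary machinery -/

lemma mssPathCost_nonneg {n : ℕ} {d : Fin n → Fin n → ℝ} (hd : ∀ x y, 0 ≤ d x y) :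
    ∀ (s : Fin n) (l : List (Fin n)), 0 ≤ mssPathCost d s l
  | _, [] => le_refl 0
  | s, x :: l => add_nonneg (hd s x) (mssPathCost_nonneg hd x l)

lemma unifR_nonneg (n : ℕ) (x y : Fin n) : 0 ≤ unifR n x y := by
  unfold unifR; split <;> norm_num

lemma unifR_le_one (n : ℕ) (x y : Fin n) : unifR n x y ≤ 1 := by
  unfold unifR; split <;> norm_num

lemma pathCost_eq {n : ℕ} (d : Fin n → Fin n → ℝ) :
    ∀ (L : ℕ) (f pre : ℕ → Fin n), (∀ t, pre (t+1) = f t) →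
    mssPathCost d (pre 0) ((List.range L).map f) = ∑ t ∈ Finset.range L, d (pre t) (f t) := by
  intro L
  induction L with
  | zero => intro f pre h; simp [mssPathCost]
  | succ L ih =>
    intro f pre h
    rw [List.range_succ_eq_map, List.map_cons, List.map_map]
    have h2 := ih (fun t => f (t+1)) (fun t => f t) (fun t => rfl)
    show d (pre 0) (f 0) + mssPathCost d (f 0) _ = _
    have hmap : f ∘ Nat.succ = fun t => f (t+1) := rfl
    rw [hmap, h2, Finset.sum_range_succ' (fun t => d (pre t) (f t)) L]
    simp only [h]
    ring

lemma algCost_eq {n : ℕ} (d : Fin n → Fin n → ℝ) (s₀ : Fin n)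
    (A : List (Finset (Fin n)) → Fin n) (ρ : List (Finset (Fin n))) :
    mssAlgCost d s₀ A ρ = ∑ t ∈ Finset.range ρ.length,
      d (if t = 0 then s₀ else A (ρ.take t)) (A (ρ.take (t+1))) := by
  have := pathCost_eq d ρ.length (fun t => A (ρ.take (t+1)))
    (fun t => if t = 0 then s₀ else A (ρ.take t)) (fun t => by simp)
  simpa [mssAlgCost, mssStates] using this

def bitSet (n K : ℕ) (i : ℕ) (b : Bool) : Finset (Fin n) :=
  Finset.univ.filter (fun x => x.val < 2^K ∧ x.val.testBit i = b)

lemma mem_bitSet {n K : ℕ} {i : ℕ} {b : Bool} {x : Fin n} :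
    x ∈ bitSet n K i b ↔ x.val < 2^K ∧ x.val.testBit i = b := by
  simp [bitSet]

lemma exists_bitpoint : ∀ (K : ℕ) (c : ℕ → Bool), ∃ x, x < 2^K ∧ ∀ i < K, x.testBit i = c i := by
  intro K
  induction K with
  | zero => intro c; exact ⟨0, by simp, by omega⟩
  | succ K ih =>
    intro c
    obtain ⟨x, hx, hb⟩ := ih (fun i => c (i+1))
    have ht : (c 0).toNat ≤ 1 := Bool.toNat_le _
    refine ⟨2 * x + (c 0).toNat, by rw [pow_succ]; omega, ?_⟩
    intro i hi
    cases i with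
    | zero =>
      rw [Nat.testBit_zero]
      rcases hc : c 0 <;> simp [hc] <;> omega
    | succ i =>
      rw [Nat.testBit_succ]
      have hdiv : (2 * x + (c 0).toNat) / 2 = x := by omega
      rw [hdiv]
      exact hb i (by omega)

lemma bitSet_nonempty {n K : ℕ} {i : ℕ} (hi : i < K) (h2K : 2^K ≤ n) (b : Bool) :
    (bitSet n K i b).Nonempty := by
  obtain ⟨x, hx, hb⟩ := exists_bitpoint K (fun _ => b)
  exact ⟨⟨x, lt_of_lt_of_le hx h2K⟩, mem_bitSet.mpr ⟨hx, hb i hi⟩⟩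

lemma bitSet_disjoint {n K : ℕ} {i : ℕ} {x : Fin n}
    (h1 : x ∈ bitSet n K i true) (h2 : x ∈ bitSet n K i false) : False := by
  have := (mem_bitSet.mp h1).2
  have := (mem_bitSet.mp h2).2
  simp_all

def mssPool (n K : ℕ) : Finset (Finset (Fin n)) :=
  Finset.image (fun p : Fin K × Bool => bitSet n K p.1.val p.2) Finset.univ

lemma mssPool_card {n K : ℕ} (hn : 0 < n) (h2K : 2^K ≤ n) :
    (mssPool n K).card = 2 * K := by
  rw [mssPool, Finset.card_image_of_injective _ ?_, Finset.card_univ]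
  · simp [Fintype.card_prod, mul_comm]
  · rintro ⟨i, b⟩ ⟨j, b'⟩ h
    simp only at h
    -- first: b = b' via the point 0
    have hz : (⟨0, hn⟩ : Fin n) ∈ bitSet n K i.val b ↔ (⟨0, hn⟩ : Fin n) ∈ bitSet n K j.val b' := by
      rw [h]
    simp only [mem_bitSet, Nat.zero_testBit, pow_pos (by norm_num : (0:ℕ) < 2), true_and] at hz
    have hb : b = b' := by
      rcases b <;> rcases b' <;> simp_all
    subst hb
    -- now i = j via the point 2^i
    refine Prod.ext ?_ rfl
    by_contra hij
    have hij' : i.val ≠ j.val := fun hv => hij (Fin.ext hv)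
    have hlt : (2:ℕ)^i.val < 2^K := Nat.pow_lt_pow_right (by norm_num) i.isLt
    have hpi : (⟨2^i.val, lt_of_lt_of_le hlt h2K⟩ : Fin n) ∈ bitSet n K i.val b ↔
        (⟨2^i.val, lt_of_lt_of_le hlt h2K⟩ : Fin n) ∈ bitSet n K j.val b := by rw [h]
    simp only [mem_bitSet, Nat.testBit_two_pow, hlt, true_and] at hpi
    rcases b <;> simp_all

def advReq (n K T : ℕ) (bv : ℕ → Bool) : List (Finset (Fin n)) :=
  (List.range T).map (fun t => bitSet n K (t % K) (bv t))

lemma advReq_length (n K T : ℕ) (bv : ℕ → Bool) : (advReq n K T bv).length = T := by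
  simp [advReq]

lemma advReq_take (n K T : ℕ) (bv : ℕ → Bool) {t : ℕ} (h : t ≤ T) :
    (advReq n K T bv).take t = advReq n K t bv := by
  rw [advReq, ← List.map_take, List.take_range, Nat.min_eq_left h]; rfl

lemma advReq_succ (n K : ℕ) (bv : ℕ → Bool) (t : ℕ) :
    advReq n K (t+1) bv = advReq n K t bv ++ [bitSet n K (t % K) (bv t)] := by
  simp [advReq, List.range_succ]

lemma advReq_congr (n K T : ℕ) {bv bv' : ℕ → Bool} (h : ∀ t < T, bv t = bv' t) :
    advReq n K T bv = advReq n K T bv' := by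
  unfold advReq
  apply List.map_congr_left
  intro t ht
  rw [h t (List.mem_range.mp ht)]

lemma advReq_mem_pool {n K T : ℕ} (hK : 0 < K) (bv : ℕ → Bool) :
    ∀ S ∈ advReq n K T bv, S ∈ mssPool n K := by
  intro S hS
  rw [advReq, List.mem_map] at hS
  obtain ⟨t, _, rfl⟩ := hS
  exact Finset.mem_image.mpr ⟨(⟨t % K, Nat.mod_lt t hK⟩, bv t), Finset.mem_univ _, rfl⟩


lemma pred_div_eq {K t : ℕ} (h : t % K ≠ 0) : (t-1)/K = t/K := by
  rcases Nat.eq_zero_or_pos K with h0|h0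
  · simp [h0]
  have hdm := Nat.div_add_mod t K
  have h1 : t - 1 = K*(t/K) + (t%K - 1) := by omega
  rw [h1, Nat.mul_add_div h0]
  have h2 : (t % K - 1) / K = 0 := Nat.div_eq_of_lt (by have := Nat.mod_lt t h0; omega)
  omega

lemma sum_indicator_mod (K : ℕ) (hK : 0 < K) (L : ℕ) :
    ∑ t ∈ Finset.range (L*K), (if t % K = 0 then (1:ℝ) else 0) = L := by
  induction L with
  | zero => simp
  | succ L ih =>
    have h1 : (L+1)*K = L*K + K := by ring
    rw [h1, Finset.range_eq_Ico,
      ← Finset.sum_Ico_consecutive _ (Nat.zero_le (L*K)) (Nat.le_add_right _ K),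
      ← Finset.range_eq_Ico, ih, Finset.sum_Ico_eq_sum_range]
    have h2 : ∀ k, (L*K + k) % K = k % K := by
      intro k; rw [add_comm, Nat.add_mul_mod_self_right]
    simp only [h2, Nat.add_sub_cancel_left]
    have h3 : ∀ k ∈ Finset.range K, (if k % K = 0 then (1:ℝ) else 0) = (if k = 0 then (1:ℝ) else 0) := by
      intro k hk
      rw [Nat.mod_eq_of_lt (Finset.mem_range.mp hk)]
    rw [Finset.sum_congr rfl h3, Finset.sum_ite_eq' (Finset.range K) 0 (fun _ => (1:ℝ))]
    simp [hK]

/-- Upper bound on the optimum: one move per phase. -/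
lemma mssOpt_le {n K L : ℕ} (hK : 0 < K) (h2K : 2^K ≤ n) (s₀ : Fin n) (bv : ℕ → Bool) :
    mssOpt (unifR n) s₀ (advReq n K (L*K) bv) ≤ L := by
  set T := L * K with hT
  have spec : ∀ j : ℕ, (exists_bitpoint K (fun i => bv (K*j + i))).choose < 2^K ∧
      ∀ i < K, ((exists_bitpoint K (fun i => bv (K*j + i))).choose).testBit i = bv (K*j+i) :=
    fun j => (exists_bitpoint K (fun i => bv (K*j + i))).choose_spec
  set f : ℕ → Fin n := fun t =>
    ⟨(exists_bitpoint K (fun i => bv (K*(t/K) + i))).choose,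
      lt_of_lt_of_le (spec (t/K)).1 h2K⟩ with hf
  set ss : List (Fin n) := (List.range T).map f with hss
  set pre : ℕ → Fin n := fun t => match t with | 0 => s₀ | (s+1) => f s with hpre
  have hmem : ∀ t < T, f t ∈ bitSet n K (t % K) (bv t) := by
    intro t ht
    rw [mem_bitSet]
    refine ⟨(spec (t/K)).1, ?_⟩
    have := (spec (t/K)).2 (t % K) (Nat.mod_lt t hK)
    rwa [Nat.div_add_mod t K] at this
  have hcost : mssPathCost (unifR n) s₀ ss = ∑ t ∈ Finset.range T, unifR n (pre t) (f t) := by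
    have := pathCost_eq (unifR n) T f pre (fun t => rfl)
    exact this
  have hbound : mssPathCost (unifR n) s₀ ss ≤ L := by
    rw [hcost]
    calc ∑ t ∈ Finset.range T, unifR n (pre t) (f t)
        ≤ ∑ t ∈ Finset.range T, (if t % K = 0 then (1:ℝ) else 0) := by
          apply Finset.sum_le_sum
          intro t ht
          by_cases hmod : t % K = 0
          · simp only [hmod, if_pos]
            exact unifR_le_one n _ _
          · have ht0 : t ≠ 0 := by
              intro h0; apply hmod; simp [h0]
            obtain ⟨s, rfl⟩ := Nat.exists_eq_succ_of_ne_zero ht0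
            have : pre (s+1) = f (s+1) := by
              show f s = f (s+1)
              have hdiv : s / K = (s+1) / K := by
                have := pred_div_eq (K := K) (t := s+1) hmod
                simpa using this
              simp only [hf, hdiv]
            rw [this]
            simp [unifR, hmod]
      _ = L := sum_indicator_mod K hK L
  have hforall : List.Forall₂ (fun (s : Fin n) (S : Finset (Fin n)) => s ∈ S) ss (advReq n K T bv) := by
    rw [List.forall₂_iff_get]
    constructor
    · simp [hss, advReq]
    · intro i h1 h2
      have hiT : i < T := by simpa [hss] using h1
      have hget1 : ss.get ⟨i, h1⟩ = f i := by simp [hss]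
      have hget2 : (advReq n K T bv).get ⟨i, h2⟩ = bitSet n K (i % K) (bv i) := by
        simp [advReq]
      rw [hget1, hget2]
      exact hmem i hiT
  have hbdd : BddBelow {x : ℝ | ∃ ss : List (Fin n),
      List.Forall₂ (fun (s : Fin n) (S : Finset (Fin n)) => s ∈ S) ss (advReq n K T bv) ∧
      mssPathCost (unifR n) s₀ ss = x} := by
    refine ⟨0, ?_⟩
    rintro x ⟨l, -, rfl⟩
    exact mssPathCost_nonneg (unifR_nonneg n) _ _
  calc mssOpt (unifR n) s₀ (advReq n K T bv) ≤ mssPathCost (unifR n) s₀ ss :=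
        csInf_le hbdd ⟨ss, hforall, rfl⟩
    _ ≤ L := hbound

lemma mssOpt_nonneg {n : ℕ} (s₀ : Fin n) (ρ : List (Finset (Fin n))) :
    0 ≤ mssOpt (unifR n) s₀ ρ := by
  apply Real.sInf_nonneg
  rintro x ⟨ss, -, rfl⟩
  exact mssPathCost_nonneg (unifR_nonneg n) _ _

def extBits (T : ℕ) (v : Fin T → Bool) : ℕ → Bool :=
  fun t => if h : t < T then v ⟨t, h⟩ else false

/-- Lower bound on total deterministic cost over all bit strings. -/
lemma det_lb {n K T : ℕ} (hK : 0 < K) (h2K : 2^K ≤ n) (s₀ : Fin n)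
    (A : List (Finset (Fin n)) → Fin n) (hA : ValidAlg A) :
    (T : ℝ) * 2^T / 2 ≤
      ∑ v : Fin T → Bool, mssAlgCost (unifR n) s₀ A (advReq n K T (extBits T v)) := by
  classical
  set ρ : (Fin T → Bool) → List (Finset (Fin n)) := fun v => advReq n K T (extBits T v) with hρ
  set F : ℕ → (Fin T → Bool) → ℝ := fun t v =>
    unifR n (if t = 0 then s₀ else A ((ρ v).take t)) (A ((ρ v).take (t+1))) with hF
  have hcost : ∀ v, mssAlgCost (unifR n) s₀ A (ρ v) = ∑ t ∈ Finset.range T, F t v := by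
    intro v
    rw [algCost_eq, advReq_length]
  have hcard : (Finset.univ : Finset (Fin T → Bool)).card = 2^T := by
    simp
  have key : ∀ t, t < T → (2:ℝ)^T / 2 ≤ ∑ v : Fin T → Bool, F t v := by
    intro t ht
    set it : Fin T := ⟨t, ht⟩ with hit
    set flip : (Fin T → Bool) → (Fin T → Bool) :=
      fun v => Function.update v it (!(v it)) with hflip
    have hinv : Function.Involutive flip := by
      intro v
      simp [hflip, Function.update_idem, Function.update_self, Bool.not_not,
        Function.update_eq_self]
    have hflipsum : ∑ v : Fin T → Bool, F t (flip v) = ∑ v : Fin T → Bool, F t v :=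
      Fintype.sum_bijective flip hinv.bijective (fun v => F t (flip v)) (F t) (fun v => rfl)
    have hpair : ∀ v : Fin T → Bool, 1 ≤ F t v + F t (flip v) := by
      intro v
      have hpre : (ρ (flip v)).take t = (ρ v).take t := by
        rw [hρ]
        simp only
        rw [advReq_take n K T _ (le_of_lt ht), advReq_take n K T _ (le_of_lt ht)]
        apply advReq_congr
        intro s hs
        unfold extBits
        have hsT : s < T := lt_trans hs ht
        rw [dif_pos hsT, dif_pos hsT, hflip]
        simp only
        rw [Function.update_of_ne (Fin.ne_of_val_ne (Nat.ne_of_lt hs)) _ _]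
      have hbt : extBits T (flip v) t = !(extBits T v t) := by
        unfold extBits
        rw [dif_pos ht, dif_pos ht, hflip]
        simp only
        rw [show (⟨t, ht⟩ : Fin T) = it from rfl, Function.update_self]
      have htake : ∀ w : Fin T → Bool, (ρ w).take (t+1) =
          advReq n K t (extBits T w) ++ [bitSet n K (t % K) (extBits T w t)] := by
        intro w
        rw [hρ]
        simp only
        rw [advReq_take n K T _ (Nat.succ_le_of_lt ht), advReq_succ]
      have hval : ∀ w : Fin T → Bool,
          A ((ρ w).take (t+1)) ∈ bitSet n K (t % K) (extBits T w t) := by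
        intro w
        rw [htake w]
        exact hA _ _ (bitSet_nonempty (Nat.mod_lt t hK) h2K _)
      set p : Fin n := if t = 0 then s₀ else A ((ρ v).take t) with hp
      have hpre2 : (if t = 0 then s₀ else A ((ρ (flip v)).take t)) = p := by
        rw [hpre]
      have hFnonneg : ∀ (t' : ℕ) (w : Fin T → Bool), 0 ≤ F t' w := by
        intro t' w
        exact unifR_nonneg n _ _
      have hone : ∀ (x : Fin n), x ≠ p → unifR n p x = 1 := by
        intro x hx
        simp [unifR, Ne.symm hx]
      by_cases hmem : p ∈ bitSet n K (t % K) (extBits T v t)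
      · -- then the flipped request excludes p
        have hnot : p ∉ bitSet n K (t % K) (extBits T (flip v) t) := by
          rw [hbt]
          intro hcon
          rcases hb : extBits T v t
          · rw [hb] at hmem hcon
            exact bitSet_disjoint hcon hmem
          · rw [hb] at hmem hcon
            exact bitSet_disjoint hmem hcon
        have hne : A ((ρ (flip v)).take (t+1)) ≠ p := by
          intro hcon
          exact hnot (hcon ▸ hval (flip v))
        have : F t (flip v) = 1 := by
          rw [hF]
          simp only
          rw [hpre2]
          exact hone _ hne
        have h0 := hFnonneg t v
        linarith
      · have hne : A ((ρ v).take (t+1)) ≠ p := by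
          intro hcon
          exact hmem (hcon ▸ hval v)
        have : F t v = 1 := by
          rw [hF]
          simp only
          rw [← hp]
          exact hone _ hne
        have h0 := hFnonneg t (flip v)
        linarith
    have hsum2 : (2:ℝ)^T ≤ 2 * ∑ v : Fin T → Bool, F t v := by
      have : (2:ℝ)^T = ∑ _v : Fin T → Bool, (1:ℝ) := by
        rw [Finset.sum_const, hcard]
        simp
      rw [this, two_mul]
      calc ∑ _v : Fin T → Bool, (1:ℝ) ≤ ∑ v : Fin T → Bool, (F t v + F t (flip v)) :=
            Finset.sum_le_sum (fun v _ => hpair v)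
        _ = ∑ v : Fin T → Bool, F t v + ∑ v : Fin T → Bool, F t (flip v) := Finset.sum_add_distrib
        _ = ∑ v : Fin T → Bool, F t v + ∑ v : Fin T → Bool, F t v := by rw [hflipsum]
    linarith
  calc (T : ℝ) * 2^T / 2 = ∑ _t ∈ Finset.range T, ((2:ℝ)^T / 2) := by
        rw [Finset.sum_const, Finset.card_range]
        push_cast
        ring
    _ ≤ ∑ t ∈ Finset.range T, ∑ v : Fin T → Bool, F t v :=
        Finset.sum_le_sum (fun t ht => key t (Finset.mem_range.mp ht))
    _ = ∑ v : Fin T → Bool, ∑ t ∈ Finset.range T, F t v := Finset.sum_comm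
    _ = ∑ v : Fin T → Bool, mssAlgCost (unifR n) s₀ A (ρ v) := by
        apply Finset.sum_congr rfl
        intro v _
        rw [hcost]

/-- For every `n ≥ 2` and `m ≥ 2`, let `k = ⌊min{m/2, log₂ n}⌋`. On the
`n`-point uniform metric space there exists a pool `R` of `2k ≤ m` nonempty subsets such
that no randomized online algorithm for the metrical service system is `c`-competitive on
`R` for any `c < k/2`. -/
theorem stmt8 (n m : ℕ) (hn : 2 ≤ n) (hm : 2 ≤ m) :
    ∃ R : Finset (Finset (Fin n)),
      R.card = 2 * ⌊min ((m : ℝ) / 2) (Real.logb 2 (n : ℝ))⌋₊ ∧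
      2 * ⌊min ((m : ℝ) / 2) (Real.logb 2 (n : ℝ))⌋₊ ≤ m ∧
      (∀ S ∈ R, S.Nonempty) ∧
      ∀ (s₀ : Fin n) (c : ℝ),
        c < (⌊min ((m : ℝ) / 2) (Real.logb 2 (n : ℝ))⌋₊ : ℝ) / 2 →
          ∀ B : MssRandAlg n, ¬ MssRandCompetitive (unifR n) s₀ ↑R c B := by
  classical
  set K := ⌊min ((m : ℝ) / 2) (Real.logb 2 (n : ℝ))⌋₊ with hKdef
  have h2m : (2:ℝ) ≤ (m:ℝ) := by exact_mod_cast hm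
  have h2n : (2:ℝ) ≤ (n:ℝ) := by exact_mod_cast hn
  have hlogb : (1:ℝ) ≤ Real.logb 2 (n : ℝ) := by
    have h1 : Real.logb 2 2 = 1 := Real.logb_self_eq_one (by norm_num)
    calc (1:ℝ) = Real.logb 2 2 := h1.symm
      _ ≤ Real.logb 2 (n:ℝ) := Real.logb_le_logb_of_le (by norm_num) (by norm_num) h2n
  have hmin1 : (1:ℝ) ≤ min ((m : ℝ) / 2) (Real.logb 2 (n : ℝ)) := by
    refine le_min (by linarith) hlogb
  have hmin0 : (0:ℝ) ≤ min ((m : ℝ) / 2) (Real.logb 2 (n : ℝ)) := by linarith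
  have hK1 : 1 ≤ K := Nat.le_floor (by exact_mod_cast hmin1)
  have hK0 : 0 < K := hK1
  have hfloor : (K:ℝ) ≤ min ((m : ℝ) / 2) (Real.logb 2 (n : ℝ)) := Nat.floor_le hmin0
  have hKm : 2 * K ≤ m := by
    have h1 : (K:ℝ) ≤ (m:ℝ)/2 := le_trans hfloor (min_le_left _ _)
    have h2 : ((2*K : ℕ):ℝ) ≤ (m:ℝ) := by push_cast; linarith
    exact_mod_cast h2
  have h2K : 2^K ≤ n := by
    have h1 : (K:ℝ) ≤ Real.logb 2 (n:ℝ) := le_trans hfloor (min_le_right _ _)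
    have h2 : (2:ℝ)^(K:ℝ) ≤ (2:ℝ)^(Real.logb 2 (n:ℝ)) :=
      (Real.rpow_le_rpow_left_iff (by norm_num : (1:ℝ) < 2)).mpr h1
    rw [Real.rpow_logb (by norm_num) (by norm_num) (by linarith)] at h2
    rw [Real.rpow_natCast] at h2
    have h3 : ((2^K : ℕ):ℝ) ≤ (n:ℝ) := by push_cast; linarith
    exact_mod_cast h3
  refine ⟨mssPool n K, mssPool_card (by omega) h2K, hKm, ?_, ?_⟩
  · intro S hS
    rw [mssPool, Finset.mem_image] at hS
    obtain ⟨⟨i, b⟩, -, rfl⟩ := hS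
    exact bitSet_nonempty i.isLt h2K b
  · intro s₀ c hc B hcomp
    obtain ⟨a, ha⟩ := hcomp
    have hKR : (0:ℝ) < (K:ℝ) := by exact_mod_cast hK0
    have hmax : max c 0 < (K:ℝ)/2 := max_lt hc (by linarith)
    set ε : ℝ := (K:ℝ)/2 - max c 0 with hε
    have hε0 : 0 < ε := by simp only [hε]; linarith
    obtain ⟨L, hL⟩ := exists_nat_gt (a / ε)
    have hLa : a < L * ε := by
      rw [div_lt_iff₀ hε0] at hL
      linarith
    set T := L * K with hTdef
    set ρ : (Fin T → Bool) → List (Finset (Fin n)) := fun v => advReq n K T (extBits T v) with hρ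
    -- upper bound per sequence from competitiveness
    have hub : ∀ v : Fin T → Bool,
        mssRandCost (unifR n) s₀ B (ρ v) ≤ max c 0 * L + a := by
      intro v
      have hmem : ∀ S ∈ ρ v, S ∈ (↑(mssPool n K) : Set (Finset (Fin n))) := by
        intro S hS
        exact Finset.mem_coe.mpr (advReq_mem_pool hK0 _ S hS)
      have h1 := ha (ρ v) hmem
      have hopt0 : 0 ≤ mssOpt (unifR n) s₀ (ρ v) := mssOpt_nonneg s₀ _
      have hoptL : mssOpt (unifR n) s₀ (ρ v) ≤ L := mssOpt_le hK0 h2K s₀ _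
      have h2 : c * mssOpt (unifR n) s₀ (ρ v) ≤ max c 0 * L := by
        rcases le_total c 0 with hc0 | hc0
        · calc c * mssOpt (unifR n) s₀ (ρ v) ≤ 0 := mul_nonpos_of_nonpos_of_nonneg hc0 hopt0
            _ ≤ max c 0 * L := mul_nonneg (le_max_right c 0) (Nat.cast_nonneg L)
        · calc c * mssOpt (unifR n) s₀ (ρ v) ≤ c * L :=
              mul_le_mul_of_nonneg_left hoptL hc0
            _ ≤ max c 0 * L := mul_le_mul_of_nonneg_right (le_max_left c 0) (Nat.cast_nonneg L)
      linarith
    -- lower bound on the total randomized cost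
    have hlb : (T : ℝ) * 2^T / 2 ≤ ∑ v : Fin T → Bool, mssRandCost (unifR n) s₀ B (ρ v) := by
      have hswap : ∑ v : Fin T → Bool, mssRandCost (unifR n) s₀ B (ρ v) =
          ∑ i, B.p i * ∑ v : Fin T → Bool, mssAlgCost (unifR n) s₀ (B.alg i) (ρ v) := by
        unfold mssRandCost
        rw [Finset.sum_comm]
        apply Finset.sum_congr rfl
        intro i _
        rw [Finset.mul_sum]
      rw [hswap]
      calc (T : ℝ) * 2^T / 2 = ∑ i, B.p i * ((T : ℝ) * 2^T / 2) := by
            rw [← Finset.sum_mul, B.sum_p, one_mul]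
        _ ≤ ∑ i, B.p i * ∑ v : Fin T → Bool, mssAlgCost (unifR n) s₀ (B.alg i) (ρ v) :=
            Finset.sum_le_sum (fun i _ => mul_le_mul_of_nonneg_left
              (det_lb hK0 h2K s₀ (B.alg i) (B.valid i)) (B.p_nonneg i))
    -- combine
    have hcard : (Finset.univ : Finset (Fin T → Bool)).card = 2^T := by simp
    have hcomb : (T : ℝ) * 2^T / 2 ≤ 2^T * (max c 0 * L + a) := by
      calc (T : ℝ) * 2^T / 2 ≤ ∑ v : Fin T → Bool, mssRandCost (unifR n) s₀ B (ρ v) := hlb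
        _ ≤ ∑ _v : Fin T → Bool, (max c 0 * L + a) := Finset.sum_le_sum (fun v _ => hub v)
        _ = 2^T * (max c 0 * L + a) := by
            rw [Finset.sum_const, hcard]
            push_cast
            ring
    have h2T : (0:ℝ) < 2^T := by positivity
    have hdiv : (T : ℝ) / 2 ≤ max c 0 * L + a := by
      have h1 : (2:ℝ)^T * ((T:ℝ)/2) ≤ (2:ℝ)^T * (max c 0 * L + a) := by
        calc (2:ℝ)^T * ((T:ℝ)/2) = (T : ℝ) * 2^T / 2 := by ring
          _ ≤ 2^T * (max c 0 * L + a) := hcomb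
      exact le_of_mul_le_mul_left h1 h2T
    have hTR : (T : ℝ) = (L:ℝ) * (K:ℝ) := by
      rw [hTdef]
      push_cast
      ring
    have hfin : (L:ℝ) * ε ≤ a := by
      have heq : (L:ℝ) * ε = (T:ℝ)/2 - max c 0 * L := by
        rw [hTR, hε]
        ring
      rw [heq]
      linarith [hdiv]
    linarith
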